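/- If an inference Γ ⇒ Δ is TS-valid, then either there is some γ ∈ Γ such that v(γ) = 0 for every SK-valuation v, or there is some δ ∈ Δ such that v(δ) = 1 for every SK-valuation v. -/
import Mathlib


/-- Propositional formulas over a countably infinite set of variables,
with constants ⊤, ⊥, λ and connectives ¬, ∨, ∧. -/
inductive Fm : Type
  | var : ℕ → Fm
  | top : Fm
  | bot : Fm
  | lam : Fm
  | neg : Fm → Fm
  | disj : Fm → Fm → Fm
  | conj : Fm → Fm → Fm
  deriving DecidableEq

/-- A function `v : Var → ℚ` is an SK-valuation if it takes values in {0, 1/2, 1}. -/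
def SK (v : ℕ → ℚ) : Prop := ∀ p : ℕ, v p = 0 ∨ v p = 1/2 ∨ v p = 1

/-- Extension of a valuation to all formulas by the Strong Kleene scheme. -/
def eval (v : ℕ → ℚ) : Fm → ℚ
  | .var p => v p
  | .top => 1
  | .bot => 0
  | .lam => 1/2
  | .neg φ => 1 - eval v φ
  | .disj φ ψ => max (eval v φ) (eval v ψ)
  | .conj φ ψ => min (eval v φ) (eval v ψ)

/-- An inference is a pair of finite sets of formulas. -/
abbrev Inference := Finset Fm × Finset Fm

def K3Valid (Γ Δ : Finset Fm) : Prop :=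
  ∀ v : ℕ → ℚ, SK v → (∀ γ ∈ Γ, eval v γ = 1) → ∃ δ ∈ Δ, eval v δ = 1

def LPValid (Γ Δ : Finset Fm) : Prop :=
  ∀ v : ℕ → ℚ, SK v → (∀ γ ∈ Γ, eval v γ ≠ 0) → ∃ δ ∈ Δ, eval v δ ≠ 0

def STValid (Γ Δ : Finset Fm) : Prop :=
  ∀ v : ℕ → ℚ, SK v → (∀ γ ∈ Γ, eval v γ = 1) → ∃ δ ∈ Δ, eval v δ ≠ 0

def TSValid (Γ Δ : Finset Fm) : Prop :=
  ∀ v : ℕ → ℚ, SK v → (∀ γ ∈ Γ, eval v γ ≠ 0) → ∃ δ ∈ Δ, eval v δ = 1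

def K3plus : Set Inference := {I | K3Valid I.1 I.2}
def LPplus : Set Inference := {I | LPValid I.1 I.2}
def STplus : Set Inference := {I | STValid I.1 I.2}
def TSplus : Set Inference := {I | TSValid I.1 I.2}

/-- Relative product: the middle term is a single formula. -/
def RelProd (R S : Set Inference) : Set Inference :=
  {I | ∃ φ : Fm, (I.1, ({φ} : Finset Fm)) ∈ R ∧ (({φ} : Finset Fm), I.2) ∈ S}

/-- Relative sum: for every single formula, one of the two components holds. -/
def RelSum (R S : Set Inference) : Set Inference :=
  {I | ∀ φ : Fm, (I.1, ({φ} : Finset Fm)) ∈ R ∨ (({φ} : Finset Fm), I.2) ∈ S}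


def v0 : ℕ → ℚ := fun _ => 1/2

lemma skv0 : SK v0 := fun _ => by norm_num [v0]

lemma sk_range (v : ℕ → ℚ) (hv : SK v) : ∀ φ, eval v φ = 0 ∨ eval v φ = 1/2 ∨ eval v φ = 1 := by
  intro φ
  induction φ with
  | var p => exact hv p
  | top => simp [eval]
  | bot => simp [eval]
  | lam => simp [eval]
  | neg φ ih => rcases ih with h | h | h <;> simp [eval, h] <;> norm_num
  | disj φ ψ ih1 ih2 =>
    rcases ih1 with h1 | h1 | h1 <;> rcases ih2 with h2 | h2 | h2 <;>
      simp [eval, h1, h2] <;> norm_num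
  | conj φ ψ ih1 ih2 =>
    rcases ih1 with h1 | h1 | h1 <;> rcases ih2 with h2 | h2 | h2 <;>
      simp [eval, h1, h2] <;> norm_num

lemma sk_nonneg (v : ℕ → ℚ) (hv : SK v) (φ : Fm) : 0 ≤ eval v φ := by
  rcases sk_range v hv φ with h | h | h <;> rw [h] <;> norm_num

lemma sk_le_one (v : ℕ → ℚ) (hv : SK v) (φ : Fm) : eval v φ ≤ 1 := by
  rcases sk_range v hv φ with h | h | h <;> rw [h] <;> norm_num

lemma key (φ : Fm) (v : ℕ → ℚ) (hv : SK v) :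
    (eval v0 φ = 0 → eval v φ = 0) ∧ (eval v0 φ = 1 → eval v φ = 1) := by
  induction φ with
  | var p => constructor <;> intro h <;> norm_num [eval, v0] at h
  | top => simp [eval]
  | bot => simp [eval]
  | lam => constructor <;> intro h <;> norm_num [eval] at h
  | neg φ ih =>
    constructor <;> intro h <;> simp only [eval] at h ⊢ <;>
      [rw [ih.2 (by linarith)]; rw [ih.1 (by linarith)]] <;> norm_num
  | disj φ ψ ih1 ih2 =>
    constructor
    · intro h
      simp only [eval] at h ⊢
      have hφ : eval v0 φ = 0 :=
        le_antisymm (h ▸ le_max_left _ _) (sk_nonneg v0 skv0 φ)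
      have hψ : eval v0 ψ = 0 :=
        le_antisymm (h ▸ le_max_right _ _) (sk_nonneg v0 skv0 ψ)
      rw [ih1.1 hφ, ih2.1 hψ]; simp
    · intro h
      simp only [eval] at h ⊢
      rw [max_eq_iff] at h
      refine le_antisymm (max_le (sk_le_one v hv φ) (sk_le_one v hv ψ)) ?_
      rcases h with ⟨h, _⟩ | ⟨h, _⟩
      · exact le_max_of_le_left (ih1.2 h).ge
      · exact le_max_of_le_right (ih2.2 h).ge
  | conj φ ψ ih1 ih2 =>
    constructor
    · intro h
      simp only [eval] at h ⊢
      rw [min_eq_iff] at h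
      refine le_antisymm ?_ (le_min (sk_nonneg v hv φ) (sk_nonneg v hv ψ))
      rcases h with ⟨h, _⟩ | ⟨h, _⟩
      · exact min_le_of_left_le (ih1.1 h).le
      · exact min_le_of_right_le (ih2.1 h).le
    · intro h
      simp only [eval] at h ⊢
      have hφ : eval v0 φ = 1 :=
        le_antisymm (sk_le_one v0 skv0 φ) (h ▸ min_le_left _ _)
      have hψ : eval v0 ψ = 1 :=
        le_antisymm (sk_le_one v0 skv0 ψ) (h ▸ min_le_right _ _)
      rw [ih1.2 hφ, ih2.2 hψ]; simp

theorem ts_valid_implies_unsat_or_unfalsifiable (Γ Δ : Finset Fm) (h : TSValid Γ Δ) :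
    (∃ γ ∈ Γ, ∀ v : ℕ → ℚ, SK v → eval v γ = 0) ∨
    (∃ δ ∈ Δ, ∀ v : ℕ → ℚ, SK v → eval v δ = 1) := by
  by_cases hc : ∀ γ ∈ Γ, eval v0 γ ≠ 0
  · right
    obtain ⟨δ, hδ, h1⟩ := h v0 skv0 hc
    exact ⟨δ, hδ, fun v hv => (key δ v hv).2 h1⟩
  · left
    push_neg at hc
    obtain ⟨γ, hγ, h0⟩ := hc
    exact ⟨γ, hγ, fun v hv => (key γ v hv).1 h0⟩
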